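/- arXiv:1911.08759 — 2 statements merged into one kernel-verified Lean document; each statement's English description precedes it below -/
import Mathlib

section
/- Let n⁽¹⁾, n⁽²⁾, n⁽³⁾ ∈ ℝ² be pairwise linearly independent vectors and let t⁽²⁾, t⁽³⁾ ∈ ℝ² be nonzero vectors with t⁽²⁾·n⁽²⁾ = 0 and t⁽³⁾·n⁽³⁾ = 0. Then the 4×4 matrix A = [[n⁽¹⁾₁, n⁽¹⁾₂, 0, 0], [0, 0, n⁽¹⁾₁, n⁽¹⁾₂], [t⁽²⁾₁n⁽²⁾₁, t⁽²⁾₁n⁽²⁾₂, t⁽²⁾₂n⁽²⁾₁, t⁽²⁾₂n⁽²⁾₂], [t⁽³⁾₁n⁽³⁾₁, t⁽³⁾₁n⁽³⁾₂, t⁽³⁾₂n⁽³⁾₁, t⁽³⁾₂n⁽³⁾₂]] is invertible. Equivalently, the linear map sending a 2×2 real matrix G to (G n⁽¹⁾, t⁽²⁾·(G n⁽²⁾), t⁽³⁾·(G n⁽³⁾)) ∈ ℝ² × ℝ × ℝ is a linear isomorphism from the space of 2×2 real matrices onto ℝ⁴. -/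
/-!
Common abstract framework for the staggered DG (SDG) method for the Brinkman
problem of Zhao–Chung–Lam.  The computational plane is `ℝ²` (as a Euclidean
space); a staggered mesh is recorded as a structure containing the simplicial
submesh `Th`, the primal edges `Fu` (with interior primal edges `Fu0`), the
dual edges `Fp`, together with unit normals/tangents, the two triangles
adjacent to each edge, the orientation signs used for jumps, and basic
geometric axioms.  Discrete (broken piecewise-polynomial) functions are
represented by families of functions indexed by the triangle on which they
live, so that jumps across edges are honest algebraic expressions.
-/

open MeasureTheory Finset

noncomputable section

abbrev V2 : Type := EuclideanSpace ℝ (Fin 2)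
abbrev M2 : Type := Matrix (Fin 2) (Fin 2) ℝ

/-- One-dimensional Hausdorff measure on the plane, used to integrate over edges. -/
def edgeM : Measure V2 := Measure.hausdorffMeasure 1

/-- `f` coincides on `s` with a polynomial of total degree at most `k`. -/
def IsPolyOn (k : ℕ) (s : Set V2) (f : V2 → ℝ) : Prop :=
  ∃ p : MvPolynomial (Fin 2) ℝ, p.totalDegree ≤ k ∧
    ∀ x ∈ s, f x = MvPolynomial.eval (fun i => x i) p

/-- `f` coincides on `s` with a polynomial of total degree strictly less than `k`
(for `k = 0` there is no such polynomial: this encodes the space `P^{k-1}`). -/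
def IsPolyOnLt (k : ℕ) (s : Set V2) (f : V2 → ℝ) : Prop :=
  ∃ p : MvPolynomial (Fin 2) ℝ, p.totalDegree < k ∧
    ∀ x ∈ s, f x = MvPolynomial.eval (fun i => x i) p

def IsPolyOnV (k : ℕ) (s : Set V2) (f : V2 → Fin 2 → ℝ) : Prop :=
  ∀ i, IsPolyOn k s fun x => f x i

def IsPolyOnM (k : ℕ) (s : Set V2) (G : V2 → M2) : Prop :=
  ∀ i j, IsPolyOn k s fun x => G x i j

def IsPolyOnLtV (k : ℕ) (s : Set V2) (f : V2 → Fin 2 → ℝ) : Prop :=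
  ∀ i, IsPolyOnLt k s fun x => f x i

def IsPolyOnLtM (k : ℕ) (s : Set V2) (G : V2 → M2) : Prop :=
  ∀ i j, IsPolyOnLt k s fun x => G x i j

/-- Partial derivative `∂f/∂x_j` (via the Fréchet derivative). -/
def pd (f : V2 → ℝ) (j : Fin 2) (x : V2) : ℝ :=
  fderiv ℝ f x (EuclideanSpace.single j (1 : ℝ))

/-- `L²`-norm of a scalar function over a set. -/
def nL2S0 (s : Set V2) (f : V2 → ℝ) : ℝ := Real.sqrt (∫ x in s, f x ^ 2)

/-- `L²`-norm of a vector field over a set. -/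
def nL2V0 (s : Set V2) (f : V2 → Fin 2 → ℝ) : ℝ := Real.sqrt (∫ x in s, ∑ i, f x i ^ 2)

/-- `H^m`-seminorm of a scalar function over `s`. -/
def sobSemiS (m : ℕ) (s : Set V2) (f : V2 → ℝ) : ℝ :=
  Real.sqrt (∫ x in s, ‖iteratedFDeriv ℝ m f x‖ ^ 2)

/-- `H^m`-norm of a scalar function over `s`. -/
def sobNormS (m : ℕ) (s : Set V2) (f : V2 → ℝ) : ℝ :=
  Real.sqrt (∑ j ∈ Finset.range (m + 1), ∫ x in s, ‖iteratedFDeriv ℝ j f x‖ ^ 2)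

/-- `H^m`-seminorm of a vector field over `s`. -/
def sobSemiV (m : ℕ) (s : Set V2) (f : V2 → Fin 2 → ℝ) : ℝ :=
  Real.sqrt (∑ i, ∫ x in s, ‖iteratedFDeriv ℝ m (fun y => f y i) x‖ ^ 2)

/-- `H^m`-norm of a vector field over `s`. -/
def sobNormV (m : ℕ) (s : Set V2) (f : V2 → Fin 2 → ℝ) : ℝ :=
  Real.sqrt (∑ i, ∑ j ∈ Finset.range (m + 1), ∫ x in s, ‖iteratedFDeriv ℝ j (fun y => f y i) x‖ ^ 2)

/-- `H^m`-seminorm of a matrix field over `s`. -/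
def sobSemiM (m : ℕ) (s : Set V2) (G : V2 → M2) : ℝ :=
  Real.sqrt (∑ i, ∑ j, ∫ x in s, ‖iteratedFDeriv ℝ m (fun y => G y i j) x‖ ^ 2)

/-- `H^m`-norm of a matrix field over `s`. -/
def sobNormM (m : ℕ) (s : Set V2) (G : V2 → M2) : ℝ :=
  Real.sqrt (∑ i, ∑ j, ∑ l ∈ Finset.range (m + 1),
    ∫ x in s, ‖iteratedFDeriv ℝ l (fun y => G y i j) x‖ ^ 2)

/-- A staggered mesh on a bounded polygonal domain `Ω ⊆ ℝ²`:
the simplicial submesh `Th`, the primal edges `Fu`, the interior primal edges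
`Fu0 ⊆ Fu`, the dual edges `Fp`, unit normal `nrm` and tangent `tng` on each
edge, the (at most two) triangles `tri1 e`, `tri2 e` adjacent to an edge `e`,
the orientation signs `sgn1`, `sgn2` defining jumps, and edge lengths `he`. -/
structure SDGMesh where
  Ω : Set V2
  openΩ : IsOpen Ω
  bddΩ : Bornology.IsBounded Ω
  Th : Finset (Set V2)
  Fu : Finset (Set V2)
  Fu0 : Finset (Set V2)
  Fp : Finset (Set V2)
  fu0_sub : Fu0 ⊆ Fu
  nrm : Set V2 → V2
  tng : Set V2 → V2
  tri1 : Set V2 → Set V2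
  tri2 : Set V2 → Set V2
  sgn1 : Set V2 → ℝ
  sgn2 : Set V2 → ℝ
  he : Set V2 → ℝ
  cover : ⋃ τ ∈ (Th : Set (Set V2)), τ = closure Ω
  tri_convex : ∀ τ ∈ Th, Convex ℝ τ ∧ IsCompact τ ∧ (interior τ).Nonempty
  tri_disj : ∀ τ₁ ∈ Th, ∀ τ₂ ∈ Th, τ₁ ≠ τ₂ → interior τ₁ ∩ interior τ₂ = ∅
  edge_seg : ∀ e, (e ∈ Fu ∨ e ∈ Fp) → ∃ a b : V2, a ≠ b ∧ e = segment ℝ a b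
  he_eq : ∀ e, (e ∈ Fu ∨ e ∈ Fp) → he e = (edgeM e).toReal
  he_pos : ∀ e, (e ∈ Fu ∨ e ∈ Fp) → 0 < he e
  nrm_unit : ∀ e, (e ∈ Fu ∨ e ∈ Fp) → ∑ i, nrm e i ^ 2 = 1
  tng_unit : ∀ e, (e ∈ Fu ∨ e ∈ Fp) → ∑ i, tng e i ^ 2 = 1
  nrm_tng : ∀ e, (e ∈ Fu ∨ e ∈ Fp) → ∑ i, nrm e i * tng e i = 0
  nrm_perp : ∀ e, (e ∈ Fu ∨ e ∈ Fp) → ∀ x ∈ e, ∀ y ∈ e, ∑ i, (x i - y i) * nrm e i = 0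
  tri1_mem : ∀ e, (e ∈ Fu ∨ e ∈ Fp) → tri1 e ∈ Th
  tri2_mem : ∀ e, (e ∈ Fu0 ∨ e ∈ Fp) → tri2 e ∈ Th
  edge_sub1 : ∀ e, (e ∈ Fu ∨ e ∈ Fp) → e ⊆ frontier (tri1 e)
  edge_sub2 : ∀ e, (e ∈ Fu0 ∨ e ∈ Fp) → e ⊆ frontier (tri2 e)
  sgn1_pm : ∀ e, sgn1 e = 1 ∨ sgn1 e = -1
  sgn2_eq : ∀ e, (e ∈ Fu0 ∨ e ∈ Fp) → sgn2 e = - sgn1 e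
  sgn2_bd : ∀ e ∈ Fu, e ∉ Fu0 → sgn2 e = 0
  outward1 : ∀ e, (e ∈ Fu ∨ e ∈ Fp) → ∀ x ∈ e, ∀ z ∈ tri1 e,
      sgn1 e * (∑ i, (z i - x i) * nrm e i) ≤ 0
  outward2 : ∀ e, (e ∈ Fu0 ∨ e ∈ Fp) → ∀ x ∈ e, ∀ z ∈ tri2 e,
      sgn2 e * (∑ i, (z i - x i) * nrm e i) ≤ 0

/-- Broken (piecewise) vector-valued functions: the component living on each triangle. -/
abbrev DiscV : Type := Set V2 → V2 → Fin 2 → ℝ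
/-- Broken matrix-valued functions. -/
abbrev DiscM : Type := Set V2 → V2 → M2
/-- Broken scalar functions. -/
abbrev DiscS : Type := Set V2 → V2 → ℝ
/-- Edge-based vector functions. -/
abbrev DiscE : Type := Set V2 → V2 → Fin 2 → ℝ

namespace SDGMesh

variable (M : SDGMesh)

/-- Mesh size `h`: the maximal triangle diameter. -/
def meshSize : ℝ := (M.Th.sup fun τ => EMetric.diam τ).toReal

/-- Shape regularity with parameter `ρ`: every triangle is star-shaped with
respect to a ball of radius proportional to its diameter, and every edge has
length comparable to the diameter of its adjacent triangle. -/
def shapeRegular (ρ : ℝ) : Prop :=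
  (∀ τ ∈ M.Th, ∃ c : V2, ∃ r : ℝ, ρ * (EMetric.diam τ).toReal ≤ r ∧
      Metric.ball c r ⊆ τ ∧ ∀ x ∈ τ, ∀ y ∈ Metric.ball c r, segment ℝ x y ⊆ τ) ∧
  (∀ e, (e ∈ M.Fu ∨ e ∈ M.Fp) → ρ * (EMetric.diam (M.tri1 e)).toReal ≤ M.he e)

/-- Membership in the velocity space `U^h`: piecewise `P^k` vector fields whose
normal component is continuous across every dual edge `e ∈ F_p`. -/
def memUh (k : ℕ) (v : DiscV) : Prop :=
  (∀ τ ∈ M.Th, IsPolyOnV k τ (v τ)) ∧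
  ∀ e ∈ M.Fp, ∀ x ∈ e,
    ∑ i, v (M.tri1 e) x i * M.nrm e i = ∑ i, v (M.tri2 e) x i * M.nrm e i

/-- Membership in the gradient space `W^h`: piecewise `P^k` matrix fields with
`G n` continuous across every interior primal edge `e ∈ F_u⁰`. -/
def memWh (k : ℕ) (G : DiscM) : Prop :=
  (∀ τ ∈ M.Th, IsPolyOnM k τ (G τ)) ∧
  ∀ e ∈ M.Fu0, ∀ x ∈ e, ∀ i,
    ∑ j, G (M.tri1 e) x i j * M.nrm e j = ∑ j, G (M.tri2 e) x i j * M.nrm e j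

/-- Membership in the pressure space `P^h`: piecewise `P^k` scalars, continuous
across interior primal edges, with zero mean. -/
def memPh (k : ℕ) (q : DiscS) : Prop :=
  (∀ τ ∈ M.Th, IsPolyOn k τ (q τ)) ∧
  (∀ e ∈ M.Fu0, ∀ x ∈ e, q (M.tri1 e) x = q (M.tri2 e) x) ∧
  (∑ τ ∈ M.Th, ∫ x in τ, q τ x) = 0

/-- Membership in the edge space `Û^h`: `P^k` vector fields on each dual edge
with vanishing normal component. -/
def memUhat (k : ℕ) (vh : DiscE) : Prop :=
  ∀ e ∈ M.Fp, IsPolyOnV k e (vh e) ∧ ∀ x ∈ e, ∑ i, vh e x i * M.nrm e i = 0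

/-- Jump of `G n` across an edge. -/
def jGn (G : DiscM) (e : Set V2) (x : V2) (i : Fin 2) : ℝ :=
  M.sgn1 e * (∑ j, G (M.tri1 e) x i j * M.nrm e j)
    + M.sgn2 e * (∑ j, G (M.tri2 e) x i j * M.nrm e j)

/-- Jump of `v` across an edge. -/
def jV (v : DiscV) (e : Set V2) (x : V2) (i : Fin 2) : ℝ :=
  M.sgn1 e * v (M.tri1 e) x i + M.sgn2 e * v (M.tri2 e) x i

/-- Jump of `v · n` across an edge. -/
def jVn (v : DiscV) (e : Set V2) (x : V2) : ℝ :=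
  M.sgn1 e * (∑ i, v (M.tri1 e) x i * M.nrm e i)
    + M.sgn2 e * (∑ i, v (M.tri2 e) x i * M.nrm e i)

/-- Jump of `v · t` across an edge. -/
def jVt (v : DiscV) (e : Set V2) (x : V2) : ℝ :=
  M.sgn1 e * (∑ i, v (M.tri1 e) x i * M.tng e i)
    + M.sgn2 e * (∑ i, v (M.tri2 e) x i * M.tng e i)

/-- Jump of a broken scalar across an edge. -/
def jS (q : DiscS) (e : Set V2) (x : V2) : ℝ :=
  M.sgn1 e * q (M.tri1 e) x + M.sgn2 e * q (M.tri2 e) x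

/-- Jump of `(v·t) t·(G n)` across an edge. -/
def jVtGn (G : DiscM) (v : DiscV) (e : Set V2) (x : V2) : ℝ :=
  M.sgn1 e * (∑ i, v (M.tri1 e) x i * M.tng e i) *
      (∑ i, ∑ j, M.tng e i * G (M.tri1 e) x i j * M.nrm e j)
    + M.sgn2 e * (∑ i, v (M.tri2 e) x i * M.tng e i) *
      (∑ i, ∑ j, M.tng e i * G (M.tri2 e) x i j * M.nrm e j)

/-- Membership in the reduced gradient space `Ŵ^h ⊆ W^h`: normal continuity
across dual edges holds weakly against all of `Û^h`. -/
def memWhat (k : ℕ) (G : DiscM) : Prop :=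
  M.memWh k G ∧ ∀ vh : DiscE, M.memUhat k vh → ∀ e ∈ M.Fp,
    (∫ x in e, ∑ i, M.jGn G e x i * vh e x i ∂edgeM) = 0

/-- `Ŵ^h`, normalised so that a broken function carries no information outside
the mesh (used to compute dimensions). -/
def memWhat₀ (k : ℕ) (G : DiscM) : Prop :=
  M.memWhat k G ∧ (∀ τ, τ ∉ M.Th → G τ = 0) ∧ (∀ τ ∈ M.Th, ∀ x, x ∉ τ → G τ x = 0)

/-- `L²(Ω)` inner product of broken matrix fields. -/
def ipM (L G : DiscM) : ℝ := ∑ τ ∈ M.Th, ∫ x in τ, ∑ i, ∑ j, L τ x i j * G τ x i j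

/-- `L²(Ω)` inner product of broken vector fields. -/
def ipV (u v : DiscV) : ℝ := ∑ τ ∈ M.Th, ∫ x in τ, ∑ i, u τ x i * v τ x i

/-- `L²(Ω)` inner product of broken scalar fields. -/
def ipS (p q : DiscS) : ℝ := ∑ τ ∈ M.Th, ∫ x in τ, p τ x * q τ x

/-- Weighted inner product `(α u, v)`. -/
def ipaV (α : V2 → ℝ) (u v : DiscV) : ℝ :=
  ∑ τ ∈ M.Th, ∫ x in τ, α x * ∑ i, u τ x i * v τ x i

/-- Pairing `(f, v)` of a given vector field with a broken one. -/
def ipFV (f : V2 → Fin 2 → ℝ) (v : DiscV) : ℝ :=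
  ∑ τ ∈ M.Th, ∫ x in τ, ∑ i, f x i * v τ x i

/-- Pairing `(g, q)` of a given scalar field with a broken one. -/
def ipGS (g : V2 → ℝ) (q : DiscS) : ℝ := ∑ τ ∈ M.Th, ∫ x in τ, g x * q τ x

/-- The bilinear form `B_h^*(v, G)`. -/
def Bs (v : DiscV) (G : DiscM) : ℝ :=
  -(∑ τ ∈ M.Th, ∫ x in τ, ∑ i, v τ x i * (∑ j, pd (fun y => G τ y i j) j x))
    + ∑ e ∈ M.Fp, ∫ x in e,
        (∑ i, v (M.tri1 e) x i * M.nrm e i) * (∑ i, M.nrm e i * M.jGn G e x i) ∂edgeM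

/-- The bilinear form `B_h(G, v)`. -/
def B (G : DiscM) (v : DiscV) : ℝ :=
  (∑ τ ∈ M.Th, ∫ x in τ, ∑ i, ∑ j, G τ x i j * pd (fun y => v τ y i) j x)
    - (∑ e ∈ M.Fu, ∫ x in e,
        ∑ i, M.jV v e x i * (∑ j, G (M.tri1 e) x i j * M.nrm e j) ∂edgeM)
    - ∑ e ∈ M.Fp, ∫ x in e, M.jVtGn G v e x ∂edgeM

/-- The bilinear form `T_h(G, v̂)`. -/
def T (G : DiscM) (vh : DiscE) : ℝ :=
  ∑ e ∈ M.Fp, ∫ x in e, ∑ i, M.jGn G e x i * vh e x i ∂edgeM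

/-- The bilinear form `T_h^*(v̂, G)`. -/
def Ts (vh : DiscE) (G : DiscM) : ℝ :=
  ∑ e ∈ M.Fp, ∫ x in e, ∑ i, vh e x i * M.jGn G e x i ∂edgeM

/-- The bilinear form `b_h^*(q, v)`. -/
def bs (q : DiscS) (v : DiscV) : ℝ :=
  -(∑ τ ∈ M.Th, ∫ x in τ, q τ x * (∑ i, pd (fun y => v τ y i) i x))
    + ∑ e ∈ M.Fu, ∫ x in e, q (M.tri1 e) x * M.jVn v e x ∂edgeM

/-- The bilinear form `b_h(v, q)`. -/
def b (v : DiscV) (q : DiscS) : ℝ :=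
  (∑ τ ∈ M.Th, ∫ x in τ, ∑ i, v τ x i * pd (fun y => q τ y) i x)
    - ∑ e ∈ M.Fp, ∫ x in e,
        (∑ i, v (M.tri1 e) x i * M.nrm e i) * M.jS q e x ∂edgeM

/-- Broken `L²(Ω)`-norms. -/
def nL2M (G : DiscM) : ℝ := Real.sqrt (M.ipM G G)

def nL2V (v : DiscV) : ℝ := Real.sqrt (M.ipV v v)

def nL2S (q : DiscS) : ℝ := Real.sqrt (M.ipS q q)

/-- Weighted norm `‖α^{1/2} v‖₀`. -/
def nAl (α : V2 → ℝ) (v : DiscV) : ℝ := Real.sqrt (M.ipaV α v v)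

/-- Broken `H¹`-seminorm `‖∇_h v‖₀`. -/
def brokenGrad (v : DiscV) : ℝ :=
  Real.sqrt (∑ τ ∈ M.Th, ∫ x in τ, ∑ i, ∑ j, (pd (fun y => v τ y i) j x) ^ 2)

/-- The norm `‖v‖_{Z₁}`. -/
def nZ1 (v : DiscV) : ℝ :=
  Real.sqrt ((∑ τ ∈ M.Th, ∫ x in τ, (∑ i, pd (fun y => v τ y i) i x) ^ 2)
    + ∑ e ∈ M.Fu, (M.he e)⁻¹ * ∫ x in e, (M.jVn v e x) ^ 2 ∂edgeM)

/-- The norm `‖v‖_{Z₂}`. -/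
def nZ2 (v : DiscV) : ℝ :=
  Real.sqrt ((∑ τ ∈ M.Th, ∫ x in τ, ∑ i, ∑ j, (pd (fun y => v τ y i) j x) ^ 2)
    + (∑ e ∈ M.Fu, (M.he e)⁻¹ * ∫ x in e, ∑ i, (M.jV v e x i) ^ 2 ∂edgeM)
    + ∑ e ∈ M.Fp, (M.he e)⁻¹ * ∫ x in e, (M.jVt v e x) ^ 2 ∂edgeM)

/-- The discrete `H(div)` seminorm `‖G‖_{Z'}`. -/
def nZp (G : DiscM) : ℝ :=
  Real.sqrt ((∑ τ ∈ M.Th, ∫ x in τ, ∑ i, (∑ j, pd (fun y => G τ y i j) j x) ^ 2)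
    + ∑ e ∈ M.Fp, (M.he e)⁻¹ * ∫ x in e, ∑ i, (M.jGn G e x i) ^ 2 ∂edgeM)

/-- The discrete norm `‖G‖_{X'}`. -/
def nXp (G : DiscM) : ℝ :=
  Real.sqrt (M.ipM G G
    + (∑ e ∈ M.Fu, M.he e * ∫ x in e,
        ∑ i, (∑ j, G (M.tri1 e) x i j * M.nrm e j) ^ 2 ∂edgeM)
    + ∑ e ∈ M.Fp, M.he e * ∫ x in e,
        (∑ i, ∑ j, M.tng e i * G (M.tri1 e) x i j * M.nrm e j) ^ 2 ∂edgeM)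

/-- `(L_h, u_h, û_h, p_h)` solves the four-field SDG system with data
`ε, α, f, g`. -/
def isSolution (k : ℕ) (ε : ℝ) (α : V2 → ℝ) (f : V2 → Fin 2 → ℝ) (g : V2 → ℝ)
    (L : DiscM) (u : DiscV) (uh : DiscE) (p : DiscS) : Prop :=
  M.memWh k L ∧ M.memUh k u ∧ M.memUhat k uh ∧ M.memPh k p ∧
  (∀ G : DiscM, M.memWh k G →
    M.ipM L G = Real.sqrt ε * M.Bs u G + Real.sqrt ε * M.Ts uh G) ∧
  (∀ v : DiscV, M.memUh k v →
    Real.sqrt ε * M.B L v + M.ipaV α u v + M.bs p v = M.ipFV f v) ∧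
  (∀ q : DiscS, M.memPh k q → -(M.b u q) = M.ipGS g q) ∧
  (∀ vh : DiscE, M.memUhat k vh → M.T L vh = 0)

/-- `(L_h, u_h, p_h)` solves the reduced three-field SDG system. -/
def isSolution3 (k : ℕ) (ε : ℝ) (α : V2 → ℝ) (f : V2 → Fin 2 → ℝ) (g : V2 → ℝ)
    (L : DiscM) (u : DiscV) (p : DiscS) : Prop :=
  M.memWhat k L ∧ M.memUh k u ∧ M.memPh k p ∧
  (∀ G : DiscM, M.memWhat k G → M.ipM L G = Real.sqrt ε * M.Bs u G) ∧
  (∀ v : DiscV, M.memUh k v →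
    Real.sqrt ε * M.B L v + M.ipaV α u v + M.bs p v = M.ipFV f v) ∧
  (∀ q : DiscS, M.memPh k q → M.b u q = M.ipGS g q)

/-- `(u, p)` is an exact solution of the Brinkman problem
`-ε Δu + α u + ∇p = f`, `div u = g` in `Ω`, `u = 0` on `∂Ω`, `∫_Ω p = 0`. -/
def isExact (ε : ℝ) (α : V2 → ℝ) (f : V2 → Fin 2 → ℝ) (g : V2 → ℝ)
    (u : V2 → Fin 2 → ℝ) (p : V2 → ℝ) : Prop :=
  (∀ x ∈ M.Ω, ∀ i, -ε * (∑ j, pd (fun y => pd (fun z => u z i) j y) j x)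
      + α x * u x i + pd p i x = f x i) ∧
  (∀ x ∈ M.Ω, (∑ i, pd (fun y => u y i) i x) = g x) ∧
  (∀ x ∈ frontier M.Ω, ∀ i, u x i = 0) ∧
  (∫ x in M.Ω, p x) = 0

/-- The matrix field `L = √ε ∇u`. -/
def gradL (ε : ℝ) (u : V2 → Fin 2 → ℝ) : V2 → M2 :=
  fun x => Matrix.of fun i j => Real.sqrt ε * pd (fun y => u y i) j x

/-- `Pih` is the interpolation operator `Π_h : H¹(Ω)^{2×2} → Ŵ^h` characterised
by `Π_h L ∈ Ŵ^h` and `B_h(L - Π_h L, v) = 0` for all `v ∈ U^h`. -/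
def isPih (k : ℕ) (Pih : (V2 → M2) → DiscM) : Prop :=
  ∀ L : V2 → M2, (∀ i j, ContDiff ℝ 1 fun x => L x i j) →
    M.memWhat k (Pih L) ∧
    ∀ v : DiscV, M.memUh k v → M.B (fun τ x => L x - Pih L τ x) v = 0

/-- `Jh` is the velocity projection `J_h : H¹(Ω)² → U^h` of the paper. -/
def isJh (k : ℕ) (Jh : (V2 → Fin 2 → ℝ) → DiscV) : Prop :=
  ∀ v : V2 → Fin 2 → ℝ, (∀ i, ContDiff ℝ 1 fun x => v x i) →
    M.memUh k (Jh v) ∧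
    (∀ e ∈ M.Fp, ∀ φ : V2 → ℝ, IsPolyOn k e φ →
      (∫ x in e, (∑ i, (Jh v (M.tri1 e) x i - v x i) * M.nrm e i) * φ x ∂edgeM) = 0) ∧
    (∀ τ ∈ M.Th, ∀ φ : V2 → Fin 2 → ℝ, IsPolyOnLtV k τ φ →
      (∫ x in τ, ∑ i, (Jh v τ x i - v x i) * φ x i) = 0)

/-- `Ih` is the pressure projection `I_h : H¹(Ω) → P^h` of the paper. -/
def isIh (k : ℕ) (Ih : (V2 → ℝ) → DiscS) : Prop :=
  ∀ q : V2 → ℝ, ContDiff ℝ 1 q →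
    (∀ τ ∈ M.Th, IsPolyOn k τ (Ih q τ)) ∧
    (∀ e ∈ M.Fu0, ∀ x ∈ e, Ih q (M.tri1 e) x = Ih q (M.tri2 e) x) ∧
    (∀ e ∈ M.Fu, ∀ φ : V2 → ℝ, IsPolyOn k e φ →
      (∫ x in e, (Ih q (M.tri1 e) x - q x) * φ x ∂edgeM) = 0) ∧
    (∀ τ ∈ M.Th, ∀ φ : V2 → ℝ, IsPolyOnLt k τ φ →
      (∫ x in τ, (Ih q τ x - q x) * φ x) = 0)

/-- Elliptic regularity for the dual (auxiliary) Brinkman problem on `Ω`: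
for every datum `θ` there is a solution `(φ, χ)` of
`-ε Δφ + α φ + ∇χ = θ`, `div φ = 0`, `φ|_∂Ω = 0` with
`‖φ‖₂ + ‖χ‖₁ ≤ C_reg ‖θ‖₀`. -/
def ellipticReg (ε : ℝ) (α : V2 → ℝ) (Creg : ℝ) : Prop :=
  ∀ θ : V2 → Fin 2 → ℝ, (∀ i, Continuous fun x => θ x i) →
    ∃ φ : V2 → Fin 2 → ℝ, ∃ χ : V2 → ℝ,
      (∀ i, ContDiff ℝ 2 fun x => φ x i) ∧ ContDiff ℝ 1 χ ∧
      (∀ x ∈ M.Ω, ∀ i, -ε * (∑ j, pd (fun y => pd (fun z => φ z i) j y) j x)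
          + α x * φ x i + pd χ i x = θ x i) ∧
      (∀ x ∈ M.Ω, (∑ i, pd (fun y => φ y i) i x) = 0) ∧
      (∀ x ∈ frontier M.Ω, ∀ i, φ x i = 0) ∧
      sobNormV 2 M.Ω φ + sobNormS 1 M.Ω χ ≤ Creg * nL2V0 M.Ω θ

/-- Continuous inf-sup (surjectivity of the divergence) on `Ω`, with constant
`Cdom`, stated against broken scalar test functions with zero mean. -/
def domInfSup (Cdom : ℝ) : Prop :=
  ∀ r : DiscS, (∑ τ ∈ M.Th, ∫ x in τ, r τ x) = 0 →
    ∃ v : V2 → Fin 2 → ℝ, (∀ i, ContDiff ℝ 1 fun x => v x i) ∧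
      (∀ x ∈ frontier M.Ω, ∀ i, v x i = 0) ∧ sobNormV 1 M.Ω v ≤ 1 ∧
      M.nL2S r ≤ Cdom * ∑ τ ∈ M.Th, ∫ x in τ, (∑ i, pd (fun y => v y i) i x) * r τ x

end SDGMesh

/-- Pairwise linear independence in the plane gives a nonzero cross product. -/
lemma cross_ne_zero_of_li {x y : Fin 2 → ℝ}
    (h : LinearIndependent ℝ ![x, y]) : x 0 * y 1 - x 1 * y 0 ≠ 0 := by
  rw [LinearIndependent.pair_iff] at h
  intro hc
  have h1 := h (y 1) (-(x 1)) (by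
    funext i
    fin_cases i
    · show y 1 * x 0 + -(x 1) * y 0 = 0
      linear_combination hc
    · show y 1 * x 1 + -(x 1) * y 1 = 0
      ring)
  have h2 := h (-(y 0)) (x 0) (by
    funext i
    fin_cases i
    · show -(y 0) * x 0 + x 0 * y 0 = 0
      ring
    · show -(y 0) * x 1 + x 0 * y 1 = 0
      linear_combination hc)
  have := h 1 0 (by
    funext i
    fin_cases i
    · show (1 : ℝ) * x 0 + 0 * y 0 = 0
      linear_combination h2.2
    · show (1 : ℝ) * x 1 + 0 * y 1 = 0
      linear_combination -h1.2)
  exact one_ne_zero this.1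

/-- invertibility of the local matrix `A` in the unisolvence
proof: if `n⁽¹⁾, n⁽²⁾, n⁽³⁾` are pairwise linearly independent and `t⁽²⁾ ⟂ n⁽²⁾`,
`t⁽³⁾ ⟂ n⁽³⁾` are nonzero, then the 4×4 matrix `A` is invertible; equivalently
`G ↦ (G n⁽¹⁾, t⁽²⁾·(G n⁽²⁾), t⁽³⁾·(G n⁽³⁾))` is a linear isomorphism of the
space of 2×2 matrices onto `ℝ⁴ = ℝ² × ℝ × ℝ`. -/
theorem local_matrix_invertible (n1 n2 n3 t2 t3 : Fin 2 → ℝ)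
    (h12 : LinearIndependent ℝ ![n1, n2])
    (h13 : LinearIndependent ℝ ![n1, n3])
    (h23 : LinearIndependent ℝ ![n2, n3])
    (ht2 : t2 ≠ 0) (ht3 : t3 ≠ 0)
    (ho2 : t2 0 * n2 0 + t2 1 * n2 1 = 0)
    (ho3 : t3 0 * n3 0 + t3 1 * n3 1 = 0) :
    IsUnit (Matrix.of ![![n1 0, n1 1, 0, 0],
        ![0, 0, n1 0, n1 1],
        ![t2 0 * n2 0, t2 0 * n2 1, t2 1 * n2 0, t2 1 * n2 1],
        ![t3 0 * n3 0, t3 0 * n3 1, t3 1 * n3 0, t3 1 * n3 1]] :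
      Matrix (Fin 4) (Fin 4) ℝ) ∧
    Function.Bijective (fun G : Matrix (Fin 2) (Fin 2) ℝ =>
      (G.mulVec n1, ∑ i, t2 i * G.mulVec n2 i, ∑ i, t3 i * G.mulVec n3 i)) := by
  have c12 := cross_ne_zero_of_li h12
  have c13 := cross_ne_zero_of_li h13
  have c23 := cross_ne_zero_of_li h23
  -- the vectors n2, n3 are nonzero, hence have positive square norm
  have hn2 : n2 0 ^ 2 + n2 1 ^ 2 ≠ 0 := by
    intro h
    have h0 : n2 0 = 0 := by
      have a1 := sq_nonneg (n2 1)
      have a0 := sq_nonneg (n2 0)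
      exact pow_eq_zero_iff two_ne_zero |>.1 (by linarith)
    have h1 : n2 1 = 0 := by
      have a1 := sq_nonneg (n2 1)
      have a0 := sq_nonneg (n2 0)
      exact pow_eq_zero_iff two_ne_zero |>.1 (by linarith)
    exact c23 (by rw [h0, h1]; ring)
  have hn3 : n3 0 ^ 2 + n3 1 ^ 2 ≠ 0 := by
    intro h
    have h0 : n3 0 = 0 := by
      have a1 := sq_nonneg (n3 1)
      have a0 := sq_nonneg (n3 0)
      exact pow_eq_zero_iff two_ne_zero |>.1 (by linarith)
    have h1 : n3 1 = 0 := by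
      have a1 := sq_nonneg (n3 1)
      have a0 := sq_nonneg (n3 0)
      exact pow_eq_zero_iff two_ne_zero |>.1 (by linarith)
    exact c23 (by rw [h0, h1]; ring)
  -- t2 is a nonzero multiple of the rotation of n2, similarly for t3
  set lam : ℝ := (t2 1 * n2 0 - t2 0 * n2 1) / (n2 0 ^ 2 + n2 1 ^ 2) with hlam
  set mu : ℝ := (t3 1 * n3 0 - t3 0 * n3 1) / (n3 0 ^ 2 + n3 1 ^ 2) with hmu
  have hp : t2 0 = -(lam * n2 1) := by
    rw [hlam]; field_simp; linear_combination (n2 0) * ho2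
  have hq : t2 1 = lam * n2 0 := by
    rw [hlam]; field_simp; linear_combination (n2 1) * ho2
  have hu : t3 0 = -(mu * n3 1) := by
    rw [hmu]; field_simp; linear_combination (n3 0) * ho3
  have hv : t3 1 = mu * n3 0 := by
    rw [hmu]; field_simp; linear_combination (n3 1) * ho3
  have hlam0 : lam ≠ 0 := by
    intro h
    apply ht2
    funext i
    fin_cases i
    · simpa [h] using hp
    · simpa [h] using hq
  have hmu0 : mu ≠ 0 := by
    intro h
    apply ht3
    funext i
    fin_cases i
    · simpa [h] using hu
    · simpa [h] using hv
  have hcross : t2 1 * t3 0 - t2 0 * t3 1 ≠ 0 := by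
    rw [hp, hq, hu, hv]
    have : lam * n2 0 * -(mu * n3 1) - -(lam * n2 1) * (mu * n3 0)
        = -(lam * mu * (n2 0 * n3 1 - n2 1 * n3 0)) := by ring
    rw [this]
    exact neg_ne_zero.2 (mul_ne_zero (mul_ne_zero hlam0 hmu0) c23)
  set A : Matrix (Fin 4) (Fin 4) ℝ :=
    (Matrix.of ![![n1 0, n1 1, 0, 0],
        ![0, 0, n1 0, n1 1],
        ![t2 0 * n2 0, t2 0 * n2 1, t2 1 * n2 0, t2 1 * n2 1],
        ![t3 0 * n3 0, t3 0 * n3 1, t3 1 * n3 0, t3 1 * n3 1]]) with hA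
  have hdet : A.det = (n1 0 * n2 1 - n1 1 * n2 0) * (n1 0 * n3 1 - n1 1 * n3 0) *
      (t2 1 * t3 0 - t2 0 * t3 1) := by
    rw [hA]
    simp [Matrix.det_succ_row_zero, Fin.sum_univ_succ, Fin.succAbove]
    ring
  have hdet0 : A.det ≠ 0 := by
    rw [hdet]; exact mul_ne_zero (mul_ne_zero c12 c13) hcross
  have hunit : IsUnit A := (Matrix.isUnit_iff_isUnit_det A).2 (isUnit_iff_ne_zero.2 hdet0)
  refine ⟨hunit, ?_⟩
  -- the key identity: A applied to vec(G) computes the map in question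
  have key : ∀ G : Matrix (Fin 2) (Fin 2) ℝ,
      A.mulVec ![G 0 0, G 0 1, G 1 0, G 1 1] =
        ![G.mulVec n1 0, G.mulVec n1 1,
          ∑ i, t2 i * G.mulVec n2 i, ∑ i, t3 i * G.mulVec n3 i] := by
    intro G
    funext i
    fin_cases i <;>
      simp [hA, Matrix.mulVec, dotProduct, Fin.sum_univ_succ] <;> ring
  have hdetu : IsUnit A.det := isUnit_iff_ne_zero.2 hdet0
  have hAinv : ∀ x : Fin 4 → ℝ, A⁻¹.mulVec (A.mulVec x) = x := by
    intro x
    rw [Matrix.mulVec_mulVec, Matrix.nonsing_inv_mul A hdetu, Matrix.one_mulVec]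
  have hAinv' : ∀ y : Fin 4 → ℝ, A.mulVec (A⁻¹.mulVec y) = y := by
    intro y
    rw [Matrix.mulVec_mulVec, Matrix.mul_nonsing_inv A hdetu, Matrix.one_mulVec]
  constructor
  · -- injectivity
    intro G H h
    simp only [Prod.mk.injEq] at h
    obtain ⟨h1, h2, h3⟩ := h
    have hvec : A.mulVec ![G 0 0, G 0 1, G 1 0, G 1 1]
        = A.mulVec ![H 0 0, H 0 1, H 1 0, H 1 1] := by
      rw [key, key, h1, h2, h3]
    have := congrArg (A⁻¹.mulVec ·) hvec
    simp only [hAinv] at this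
    ext i j
    fin_cases i <;> fin_cases j
    · exact congrFun this 0
    · exact congrFun this 1
    · exact congrFun this 2
    · exact congrFun this 3
  · -- surjectivity
    rintro ⟨v, s, r⟩
    set x : Fin 4 → ℝ := A⁻¹.mulVec ![v 0, v 1, s, r] with hx
    refine ⟨Matrix.of ![![x 0, x 1], ![x 2, x 3]], ?_⟩
    set G : Matrix (Fin 2) (Fin 2) ℝ := Matrix.of ![![x 0, x 1], ![x 2, x 3]] with hG
    have hxG : (![G 0 0, G 0 1, G 1 0, G 1 1] : Fin 4 → ℝ) = x := by
      funext i; fin_cases i <;> simp [hG]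
    have : (![G.mulVec n1 0, G.mulVec n1 1,
        ∑ i, t2 i * G.mulVec n2 i, ∑ i, t3 i * G.mulVec n3 i] : Fin 4 → ℝ)
        = ![v 0, v 1, s, r] := by
      rw [← key G, hxG, hx, hAinv']
    refine Prod.ext ?_ (Prod.ext ?_ ?_)
    · funext i
      fin_cases i
      · exact congrFun this 0
      · exact congrFun this 1
    · exact congrFun this 2
    · exact congrFun this 3
end
end

section
/- The projections I_h and J_h satisfy the discrete orthogonality relations b_h(v − J_h v, q) = 0 for all q ∈ P^h and all v ∈ H¹(Ω)², and b_h*(q − I_h q, v) = 0 for all v ∈ U^h and all q ∈ H¹(Ω). -/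
/-!
Common abstract framework for the staggered DG (SDG) method for the Brinkman
problem of Zhao–Chung–Lam.  The computational plane is `ℝ²` (as a Euclidean
space); a staggered mesh is recorded as a structure containing the simplicial
submesh `Th`, the primal edges `Fu` (with interior primal edges `Fu0`), the
dual edges `Fp`, together with unit normals/tangents, the two triangles
adjacent to each edge, the orientation signs used for jumps, and basic
geometric axioms.  Discrete (broken piecewise-polynomial) functions are
represented by families of functions indexed by the triangle on which they
live, so that jumps across edges are honest algebraic expressions.
-/

open MeasureTheory Finset

noncomputable section

section Helpers

open MvPolynomial

lemma hasFDerivAt_evalPoly (p : MvPolynomial (Fin 2) ℝ) (x : V2) :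
    HasFDerivAt (fun y : V2 => eval (fun i => y i) p)
      (∑ j : Fin 2, eval (fun i => x i) (pderiv j p) • (EuclideanSpace.proj j : V2 →L[ℝ] ℝ)) x := by
  induction p using MvPolynomial.induction_on with
  | C a => simpa using hasFDerivAt_const a x
  | add p q hp hq =>
      have h := hp.add hq
      refine (h.congr_fderiv ?_).congr_of_eventuallyEq (Filter.Eventually.of_forall fun y => ?_)
      · rw [← Finset.sum_add_distrib]
        exact (Finset.sum_congr rfl fun j _ => by rw [(pderiv j).map_add, map_add, add_smul]).symm
      · simp
  | mul_X p n hp =>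
      have h2 : HasFDerivAt (fun y : V2 => y n) (EuclideanSpace.proj n : V2 →L[ℝ] ℝ) x :=
        (EuclideanSpace.proj n : V2 →L[ℝ] ℝ).hasFDerivAt
      have h := hp.mul h2
      have hfun : (fun y : V2 => eval (fun i => y i) (p * X n))
          = fun y : V2 => (eval (fun i => y i) p) * y n := by
        funext y; simp
      rw [hfun]
      refine (h.congr_fderiv ?_).congr_of_eventuallyEq (Filter.Eventually.of_forall fun y => rfl)
      ext w
      simp [pderiv_mul, Pi.single_apply, add_mul, Finset.sum_add_distrib, Finset.mul_sum,
        mul_ite, ite_mul, Finset.sum_ite_eq', mul_comm, mul_left_comm, mul_assoc]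
      fin_cases n <;> simp <;> ring

lemma pd_evalPoly (p : MvPolynomial (Fin 2) ℝ) (j : Fin 2) (x : V2) :
    pd (fun y : V2 => eval (fun i => y i) p) j x = eval (fun i => x i) (pderiv j p) := by
  rw [pd, (hasFDerivAt_evalPoly p x).fderiv]
  simp [EuclideanSpace.single_apply, mul_ite, Finset.sum_ite_eq']
  fin_cases j <;> simp

lemma pderiv_eq_zero_of_td (p : MvPolynomial (Fin 2) ℝ) (h : p.totalDegree = 0) (j : Fin 2) :
    pderiv j p = 0 := by
  conv_lhs => rw [p.as_sum]
  rw [map_sum]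
  refine Finset.sum_eq_zero fun m hm => ?_
  rw [pderiv_monomial]
  have := (MvPolynomial.totalDegree_eq_zero_iff _ p).mp h m hm j
  simp [this]

lemma td_pderiv_lt {k : ℕ} (hk : 0 < k) (p : MvPolynomial (Fin 2) ℝ)
    (hp : p.totalDegree ≤ k) (j : Fin 2) : (pderiv j p).totalDegree < k := by
  refine lt_of_le_of_lt (?_ : _ ≤ k - 1) (Nat.sub_lt hk one_pos)
  conv_lhs => rw [p.as_sum]
  rw [map_sum]
  refine (MvPolynomial.totalDegree_finset_sum _ _).trans (Finset.sup_le fun m hm => ?_)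
  rw [pderiv_monomial]
  rcases Nat.eq_zero_or_pos (m j) with h0 | h1
  · simp [h0]
  · refine (MvPolynomial.totalDegree_monomial_le _ _).trans ?_
    have hms : (m.sum fun _ e => e) ≤ k := (MvPolynomial.le_totalDegree hm).trans hp
    rw [Finsupp.sum_fintype _ _ (fun _ => rfl)] at hms ⊢
    have happ : ∀ i, ((m - Finsupp.single j 1 : Fin 2 →₀ ℕ)) i
        = m i - (Finsupp.single j 1 : Fin 2 →₀ ℕ) i :=
      fun i => Finsupp.tsub_apply m _ i
    simp only [happ, Finsupp.single_apply]
    fin_cases j <;> simp [Fin.sum_univ_two] at hms h1 ⊢ <;> omega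

lemma pd_eq_on_interior {τ : Set V2} (f : V2 → ℝ) (p : MvPolynomial (Fin 2) ℝ)
    (hfp : ∀ x ∈ τ, f x = eval (fun i => x i) p) (j : Fin 2) {x : V2} (hx : x ∈ interior τ) :
    pd f j x = eval (fun i => x i) (pderiv j p) := by
  have hev : f =ᶠ[nhds x] fun y : V2 => eval (fun i => y i) p :=
    Filter.eventuallyEq_of_mem (isOpen_interior.mem_nhds hx)
      (fun y hy => hfp y (interior_subset hy))
  rw [pd, hev.fderiv_eq, ← pd, pd_evalPoly]

lemma setIntegral_congr_interior {τ : Set V2} (hc : Convex ℝ τ) (hcl : IsClosed τ)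
    {g1 g2 : V2 → ℝ} (h : ∀ x ∈ interior τ, g1 x = g2 x) :
    ∫ x in τ, g1 x = ∫ x in τ, g2 x := by
  refine setIntegral_congr_ae hcl.measurableSet ?_
  have hfr : (volume : Measure V2) (frontier τ) = 0 := hc.addHaar_frontier volume
  have hae : ∀ᵐ x : V2, x ∉ frontier τ := (measure_eq_zero_iff_ae_notMem).mp hfr
  filter_upwards [hae] with x hx hxτ
  refine h x ?_
  by_contra hni
  exact hx (hcl.frontier_eq ▸ ⟨hxτ, hni⟩)

lemma IsPolyOn.congr {k : ℕ} {s : Set V2} {f g : V2 → ℝ} (h : IsPolyOn k s g)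
    (hfg : ∀ x ∈ s, f x = g x) : IsPolyOn k s f := by
  obtain ⟨p, hp, he⟩ := h
  exact ⟨p, hp, fun x hx => (hfg x hx).trans (he x hx)⟩

lemma IsPolyOn.mono {k : ℕ} {s t : Set V2} {f : V2 → ℝ} (h : IsPolyOn k s f)
    (hts : t ⊆ s) : IsPolyOn k t f := by
  obtain ⟨p, hp, he⟩ := h
  exact ⟨p, hp, fun x hx => he x (hts hx)⟩

lemma IsPolyOn.const_mul {k : ℕ} {s : Set V2} {f : V2 → ℝ} (h : IsPolyOn k s f) (c : ℝ) :
    IsPolyOn k s fun x => c * f x := by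
  obtain ⟨p, hp, he⟩ := h
  refine ⟨C c * p, (MvPolynomial.totalDegree_mul _ _).trans ?_, fun x hx => by simp [he x hx]⟩
  simp [MvPolynomial.totalDegree_C, hp]

lemma IsPolyOn.mul_const {k : ℕ} {s : Set V2} {f : V2 → ℝ} (h : IsPolyOn k s f) (c : ℝ) :
    IsPolyOn k s fun x => f x * c :=
  (h.const_mul c).congr fun x _ => mul_comm _ _

lemma IsPolyOn.add {k : ℕ} {s : Set V2} {f g : V2 → ℝ} (hf : IsPolyOn k s f)
    (hg : IsPolyOn k s g) : IsPolyOn k s fun x => f x + g x := by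
  obtain ⟨p, hp, hep⟩ := hf
  obtain ⟨q, hq, heq⟩ := hg
  exact ⟨p + q, (MvPolynomial.totalDegree_add p q).trans (max_le hp hq),
    fun x hx => by simp [hep x hx, heq x hx]⟩

lemma IsPolyOn.finset_sum {k : ℕ} {s : Set V2} {ι : Type*} (t : Finset ι) (F : ι → V2 → ℝ)
    (h : ∀ i ∈ t, IsPolyOn k s (F i)) : IsPolyOn k s fun x => ∑ i ∈ t, F i x := by
  classical
  induction t using Finset.induction_on with
  | empty => exact ⟨0, by simp, by simp⟩
  | insert a t' hnot ih =>
      have h1 := h a (Finset.mem_insert_self a t')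
      have h2 := ih fun i hi => h i (Finset.mem_insert_of_mem hi)
      exact (h1.add h2).congr fun x _ => Finset.sum_insert hnot

end Helpers

/-- discrete orthogonality relations of the projections
`J_h` and `I_h`: `b_h(v - J_h v, q) = 0` for all `q ∈ P^h`, `v ∈ H¹(Ω)²`, and
`b_h^*(q - I_h q, v) = 0` for all `v ∈ U^h`, `q ∈ H¹(Ω)`. -/
theorem projection_orthogonality (M : SDGMesh) (k : ℕ)
    (Jh : (V2 → Fin 2 → ℝ) → DiscV) (hJh : M.isJh k Jh)
    (Ih : (V2 → ℝ) → DiscS) (hIh : M.isIh k Ih) :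
    (∀ v : V2 → Fin 2 → ℝ, (∀ i, ContDiff ℝ 1 fun x => v x i) →
      ∀ q : DiscS, M.memPh k q →
        M.b (fun τ x i => v x i - Jh v τ x i) q = 0) ∧
    (∀ q : V2 → ℝ, ContDiff ℝ 1 q →
      ∀ v : DiscV, M.memUh k v →
        M.bs (fun τ x => q x - Ih q τ x) v = 0) := by
  constructor
  · intro v hv q hq
    obtain ⟨hJmem, hJedge, hJmom⟩ := hJh v hv
    obtain ⟨hqpoly, hqcont, hqmean⟩ := hq
    have hA : (∑ τ ∈ M.Th, ∫ x in τ, ∑ i, (v x i - Jh v τ x i) * pd (fun y => q τ y) i x) = 0 := by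
      refine Finset.sum_eq_zero fun τ hτ => ?_
      obtain ⟨p, hpk, hpe⟩ := hqpoly τ hτ
      obtain ⟨hconv, hcomp, -⟩ := M.tri_convex τ hτ
      have hstep : (∫ x in τ, ∑ i, (v x i - Jh v τ x i) * pd (fun y => q τ y) i x)
          = ∫ x in τ, ∑ i, (v x i - Jh v τ x i) *
              MvPolynomial.eval (fun l => x l) (MvPolynomial.pderiv i p) := by
        refine setIntegral_congr_interior hconv hcomp.isClosed fun x hx => ?_
        exact Finset.sum_congr rfl fun i _ => by
          rw [pd_eq_on_interior (fun y => q τ y) p hpe i hx]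
      rw [hstep]
      rcases Nat.eq_zero_or_pos k with hk0 | hk
      · have hd0 : p.totalDegree = 0 := le_antisymm (hk0 ▸ hpk) (Nat.zero_le _)
        have hz : ∀ i : Fin 2, MvPolynomial.pderiv i p = 0 := pderiv_eq_zero_of_td p hd0
        simp [hz]
      · have hmom := hJmom τ hτ
          (fun x i => MvPolynomial.eval (fun l => x l) (MvPolynomial.pderiv i p))
          (fun i => ⟨MvPolynomial.pderiv i p, td_pderiv_lt hk p hpk i, fun x _ => rfl⟩)
        have hptw : ∀ x : V2, (∑ i, (v x i - Jh v τ x i) *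
              MvPolynomial.eval (fun l => x l) (MvPolynomial.pderiv i p))
            = -(∑ i, (Jh v τ x i - v x i) *
              MvPolynomial.eval (fun l => x l) (MvPolynomial.pderiv i p)) := by
          intro x
          rw [← Finset.sum_neg_distrib]
          exact Finset.sum_congr rfl fun i _ => by ring
        simp_rw [hptw]
        rw [integral_neg, hmom, neg_zero]
    have hB : (∑ e ∈ M.Fp, ∫ x in e,
        (∑ i, (v x i - Jh v (M.tri1 e) x i) * M.nrm e i) * M.jS q e x ∂edgeM) = 0 := by
      refine Finset.sum_eq_zero fun e he => ?_
      have hclosed : ∀ τ ∈ M.Th, IsClosed τ := fun τ hτ => (M.tri_convex τ hτ).2.1.isClosed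
      have hsub1 : e ⊆ M.tri1 e := fun x hx => by
        rw [← (hclosed _ (M.tri1_mem e (Or.inr he))).closure_eq]
        exact frontier_subset_closure (M.edge_sub1 e (Or.inr he) hx)
      have hsub2 : e ⊆ M.tri2 e := fun x hx => by
        rw [← (hclosed _ (M.tri2_mem e (Or.inr he))).closure_eq]
        exact frontier_subset_closure (M.edge_sub2 e (Or.inr he) hx)
      have hq1 : IsPolyOn k e fun x => q (M.tri1 e) x :=
        (hqpoly _ (M.tri1_mem e (Or.inr he))).mono hsub1
      have hq2 : IsPolyOn k e fun x => q (M.tri2 e) x :=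
        (hqpoly _ (M.tri2_mem e (Or.inr he))).mono hsub2
      have hφ : IsPolyOn k e (M.jS q e) :=
        ((hq1.const_mul (M.sgn1 e)).add (hq2.const_mul (M.sgn2 e))).congr fun x _ => rfl
      have h0 := hJedge e he (M.jS q e) hφ
      have hptw : ∀ x : V2, (∑ i, (v x i - Jh v (M.tri1 e) x i) * M.nrm e i) * M.jS q e x
          = -((∑ i, (Jh v (M.tri1 e) x i - v x i) * M.nrm e i) * M.jS q e x) := by
        intro x
        have hs : (∑ i, (v x i - Jh v (M.tri1 e) x i) * M.nrm e i)
            = -(∑ i, (Jh v (M.tri1 e) x i - v x i) * M.nrm e i) := by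
          rw [← Finset.sum_neg_distrib]
          exact Finset.sum_congr rfl fun i _ => by ring
        rw [hs, neg_mul]
      simp_rw [hptw]
      rw [integral_neg, h0, neg_zero]
    simp only [SDGMesh.b]
    rw [hA, hB, sub_zero]
  · intro q hqc v hvmem
    obtain ⟨hIpoly, hIcont, hIedge, hImom⟩ := hIh q hqc
    obtain ⟨hvpoly, hvn⟩ := hvmem
    have hA : (∑ τ ∈ M.Th, ∫ x in τ,
        (q x - Ih q τ x) * (∑ i, pd (fun y => v τ y i) i x)) = 0 := by
      refine Finset.sum_eq_zero fun τ hτ => ?_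
      choose P hPk hPe using fun i : Fin 2 => hvpoly τ hτ i
      obtain ⟨hconv, hcomp, -⟩ := M.tri_convex τ hτ
      have hstep : (∫ x in τ, (q x - Ih q τ x) * (∑ i, pd (fun y => v τ y i) i x))
          = ∫ x in τ, (q x - Ih q τ x) *
              (∑ i, MvPolynomial.eval (fun l => x l) (MvPolynomial.pderiv i (P i))) := by
        refine setIntegral_congr_interior hconv hcomp.isClosed fun x hx => ?_
        congr 1
        exact Finset.sum_congr rfl fun i _ =>
          pd_eq_on_interior (fun y => v τ y i) (P i) (hPe i) i hx
      rw [hstep]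
      rcases Nat.eq_zero_or_pos k with hk0 | hk
      · have hz : ∀ i : Fin 2, MvPolynomial.pderiv i (P i) = 0 := fun i =>
          pderiv_eq_zero_of_td (P i) (le_antisymm (hk0 ▸ hPk i) (Nat.zero_le _)) i
        simp [hz]
      · have hlt : IsPolyOnLt k τ fun x =>
            ∑ i, MvPolynomial.eval (fun l => x l) (MvPolynomial.pderiv i (P i)) := by
          refine ⟨∑ i : Fin 2, MvPolynomial.pderiv i (P i), ?_, fun x _ => by simp⟩
          refine lt_of_le_of_lt (MvPolynomial.totalDegree_finset_sum _ _) ?_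
          exact (Finset.sup_lt_iff (by simpa using hk)).mpr
            fun i _ => td_pderiv_lt hk (P i) (hPk i) i
        have hmom := hImom τ hτ _ hlt
        have hptw : ∀ x : V2, (q x - Ih q τ x) *
              (∑ i, MvPolynomial.eval (fun l => x l) (MvPolynomial.pderiv i (P i)))
            = -((Ih q τ x - q x) *
              (∑ i, MvPolynomial.eval (fun l => x l) (MvPolynomial.pderiv i (P i)))) :=
          fun x => by ring
        simp_rw [hptw]
        rw [integral_neg, hmom, neg_zero]
    have hB : (∑ e ∈ M.Fu, ∫ x in e,
        (q x - Ih q (M.tri1 e) x) * M.jVn v e x ∂edgeM) = 0 := by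
      refine Finset.sum_eq_zero fun e he => ?_
      have hclosed : ∀ τ ∈ M.Th, IsClosed τ := fun τ hτ => (M.tri_convex τ hτ).2.1.isClosed
      have hsub1 : e ⊆ M.tri1 e := fun x hx => by
        rw [← (hclosed _ (M.tri1_mem e (Or.inl he))).closure_eq]
        exact frontier_subset_closure (M.edge_sub1 e (Or.inl he) hx)
      have hA1 : IsPolyOn k e fun x => ∑ i, v (M.tri1 e) x i * M.nrm e i :=
        IsPolyOn.finset_sum _ _ fun i _ =>
          ((hvpoly _ (M.tri1_mem e (Or.inl he)) i).mono hsub1).mul_const _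
      have hφ : IsPolyOn k e (M.jVn v e) := by
        by_cases he0 : e ∈ M.Fu0
        · have hsub2 : e ⊆ M.tri2 e := fun x hx => by
            rw [← (hclosed _ (M.tri2_mem e (Or.inl he0))).closure_eq]
            exact frontier_subset_closure (M.edge_sub2 e (Or.inl he0) hx)
          have hA2 : IsPolyOn k e fun x => ∑ i, v (M.tri2 e) x i * M.nrm e i :=
            IsPolyOn.finset_sum _ _ fun i _ =>
              ((hvpoly _ (M.tri2_mem e (Or.inl he0)) i).mono hsub2).mul_const _
          exact ((hA1.const_mul (M.sgn1 e)).add (hA2.const_mul (M.sgn2 e))).congr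
            fun x _ => rfl
        · have hs2 : M.sgn2 e = 0 := M.sgn2_bd e he he0
          refine (hA1.const_mul (M.sgn1 e)).congr fun x _ => ?_
          simp [SDGMesh.jVn, hs2]
      have h0 := hIedge e he (M.jVn v e) hφ
      have hptw : ∀ x : V2, (q x - Ih q (M.tri1 e) x) * M.jVn v e x
          = -((Ih q (M.tri1 e) x - q x) * M.jVn v e x) := fun x => by ring
      simp_rw [hptw]
      rw [integral_neg, h0, neg_zero]
    simp only [SDGMesh.bs]
    rw [hA, hB, neg_zero, zero_add]
end
end
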